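/- Let I be a nonempty finite index set, let c : I → ℝ be nonnegative with c_m > 0 for at least one m, let s : I → ℝ be nonnegative, and let 0 ≤ δ₁ < δ₂. For d > 0 define H₁(d) = Σ_{m∈I} c_m/√(d² + δ₁² + s_m) and H₂(d) = Σ_{m∈I} c_m/√(d² + δ₂² + s_m). Then the function d ↦ H₁(d)² − H₂(d)² is strictly positive and strictly decreasing on (0,∞). -/

import Mathlib

private lemma inv_sqrt_diff_eq (x y : ℝ) (hx : 0 < x) (hxy : x < y) :
    1 / Real.sqrt x - 1 / Real.sqrt y =
      (y - x) / (Real.sqrt x * Real.sqrt y * (Real.sqrt x + Real.sqrt y)) := by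
  have hy : 0 < y := hx.trans hxy
  have hsx : 0 < Real.sqrt x := Real.sqrt_pos.mpr hx
  have hsy : 0 < Real.sqrt y := Real.sqrt_pos.mpr hy
  have hx2 : Real.sqrt x * Real.sqrt x = x := Real.mul_self_sqrt hx.le
  have hy2 : Real.sqrt y * Real.sqrt y = y := Real.mul_self_sqrt hy.le
  rw [← hx2, ← hy2]
  field_simp
  rw [Real.sqrt_sq hsx.le, Real.sqrt_sq hsy.le]
  ring

private lemma core (u v A B : ℝ) (hu : 0 < u) (huv : u < v) (hA : 0 ≤ A) (hAB : A < B) :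
    1 / Real.sqrt (v + A) - 1 / Real.sqrt (v + B) <
      1 / Real.sqrt (u + A) - 1 / Real.sqrt (u + B) := by
  have huA : 0 < u + A := by linarith
  have huB : 0 < u + B := by linarith
  have h1 := inv_sqrt_diff_eq (u + A) (v + A) huA (by linarith)
  have h2 := inv_sqrt_diff_eq (u + B) (v + B) huB (by linarith)
  have key : (v - u) / (Real.sqrt (u + B) * Real.sqrt (v + B) *
        (Real.sqrt (u + B) + Real.sqrt (v + B))) <
      (v - u) / (Real.sqrt (u + A) * Real.sqrt (v + A) *
        (Real.sqrt (u + A) + Real.sqrt (v + A))) := by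
    have sA1 : 0 < Real.sqrt (u + A) := Real.sqrt_pos.mpr huA
    have sA2 : 0 < Real.sqrt (v + A) := Real.sqrt_pos.mpr (by linarith)
    have l1 : Real.sqrt (u + A) < Real.sqrt (u + B) := Real.sqrt_lt_sqrt huA.le (by linarith)
    have l2 : Real.sqrt (v + A) < Real.sqrt (v + B) := Real.sqrt_lt_sqrt (by linarith) (by linarith)
    apply div_lt_div_of_pos_left (by linarith) (by positivity)
    have hp : Real.sqrt (u + A) * Real.sqrt (v + A) <
        Real.sqrt (u + B) * Real.sqrt (v + B) := mul_lt_mul'' l1 l2 sA1.le sA2.le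
    have hq : Real.sqrt (u + A) + Real.sqrt (v + A) <
        Real.sqrt (u + B) + Real.sqrt (v + B) := add_lt_add l1 l2
    exact mul_lt_mul'' hp hq (by positivity) (by positivity)
  have e1 : (v + A) - (u + A) = v - u := by ring
  have e2 : (v + B) - (u + B) = v - u := by ring
  rw [e1] at h1; rw [e2] at h2
  linarith

theorem gain_gap_pos_and_strictAnti {ι : Type*} [Fintype ι] [Nonempty ι]
    (c s : ι → ℝ) (hc : ∀ m, 0 ≤ c m) (hc' : ∃ m, 0 < c m) (hs : ∀ m, 0 ≤ s m)
    (δ₁ δ₂ : ℝ) (hδ₁ : 0 ≤ δ₁) (hδ₁₂ : δ₁ < δ₂) :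
    (∀ d ∈ Set.Ioi (0 : ℝ),
      0 < (∑ m, c m / Real.sqrt (d ^ 2 + δ₁ ^ 2 + s m)) ^ 2 -
          (∑ m, c m / Real.sqrt (d ^ 2 + δ₂ ^ 2 + s m)) ^ 2) ∧
    StrictAntiOn
      (fun d : ℝ =>
        (∑ m, c m / Real.sqrt (d ^ 2 + δ₁ ^ 2 + s m)) ^ 2 -
        (∑ m, c m / Real.sqrt (d ^ 2 + δ₂ ^ 2 + s m)) ^ 2)
      (Set.Ioi 0) := by
  obtain ⟨m₀, hm₀⟩ := hc'
  have hδsq : δ₁ ^ 2 < δ₂ ^ 2 := by nlinarith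
  set H₁ : ℝ → ℝ := fun d => ∑ m, c m / Real.sqrt (d ^ 2 + δ₁ ^ 2 + s m) with hH₁
  set H₂ : ℝ → ℝ := fun d => ∑ m, c m / Real.sqrt (d ^ 2 + δ₂ ^ 2 + s m) with hH₂
  have harg1 : ∀ (d : ℝ), 0 < d → ∀ m, 0 < d ^ 2 + δ₁ ^ 2 + s m := by
    intro d hd m; have := hs m; positivity
  -- H₂ ≥ 0
  have hH₂nn : ∀ d, 0 < d → 0 ≤ H₂ d := by
    intro d hd
    apply Finset.sum_nonneg
    intro m _
    have h := harg1 d hd m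
    have := hc m
    have h2 : 0 < d ^ 2 + δ₂ ^ 2 + s m := by nlinarith
    positivity
  -- H₂ < H₁ pointwise on (0,∞)
  have hlt : ∀ d, 0 < d → H₂ d < H₁ d := by
    intro d hd
    apply Finset.sum_lt_sum
    · intro m _
      apply div_le_div_of_nonneg_left (hc m) (Real.sqrt_pos.mpr (harg1 d hd m))
      exact Real.sqrt_le_sqrt (by linarith)
    · refine ⟨m₀, Finset.mem_univ _, ?_⟩
      apply div_lt_div_of_pos_left hm₀ (Real.sqrt_pos.mpr (harg1 d hd m₀))
      exact Real.sqrt_lt_sqrt (harg1 d hd m₀).le (by linarith)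
  -- each Hᵢ is strictly decreasing (we only need ≤ for H₂, < for H₁)
  have hanti : ∀ (δ : ℝ), δ₁ ≤ δ → ∀ u v : ℝ, 0 < u → u < v →
      (∑ m, c m / Real.sqrt (v ^ 2 + δ ^ 2 + s m)) <
        (∑ m, c m / Real.sqrt (u ^ 2 + δ ^ 2 + s m)) := by
    intro δ hδ u v hu huv
    have husq : u ^ 2 < v ^ 2 := by nlinarith
    have hposu : ∀ m, 0 < u ^ 2 + δ ^ 2 + s m := by
      intro m; have := hs m; positivity
    apply Finset.sum_lt_sum
    · intro m _
      apply div_le_div_of_nonneg_left (hc m) (Real.sqrt_pos.mpr (hposu m))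
      exact Real.sqrt_le_sqrt (by linarith)
    · refine ⟨m₀, Finset.mem_univ _, ?_⟩
      apply div_lt_div_of_pos_left hm₀ (Real.sqrt_pos.mpr (hposu m₀))
      exact Real.sqrt_lt_sqrt (hposu m₀).le (by linarith)
  -- the difference H₁ - H₂ is strictly decreasing on (0,∞)
  have hDanti : ∀ u v : ℝ, 0 < u → u < v → H₁ v - H₂ v < H₁ u - H₂ u := by
    intro u v hu huv
    have : ∀ (w : ℝ), H₁ w - H₂ w =
        ∑ m, (c m / Real.sqrt (w ^ 2 + δ₁ ^ 2 + s m) -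
              c m / Real.sqrt (w ^ 2 + δ₂ ^ 2 + s m)) := by
      intro w; simp [hH₁, hH₂, Finset.sum_sub_distrib]
    rw [this u, this v]
    apply Finset.sum_lt_sum
    · intro m _
      have hcore := core (u ^ 2) (v ^ 2) (δ₁ ^ 2 + s m) (δ₂ ^ 2 + s m)
        (by positivity) (by nlinarith) (by have := hs m; positivity) (by linarith)
      have e : ∀ (w δ : ℝ), c m / Real.sqrt (w ^ 2 + δ ^ 2 + s m) =
          c m * (1 / Real.sqrt (w ^ 2 + (δ ^ 2 + s m))) := by
        intro w δ; rw [mul_one_div]; ring_nf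
      rw [e v δ₁, e v δ₂, e u δ₁, e u δ₂, ← mul_sub, ← mul_sub]
      exact mul_le_mul_of_nonneg_left hcore.le (hc m)
    · refine ⟨m₀, Finset.mem_univ _, ?_⟩
      have hcore := core (u ^ 2) (v ^ 2) (δ₁ ^ 2 + s m₀) (δ₂ ^ 2 + s m₀)
        (by positivity) (by nlinarith) (by have := hs m₀; positivity) (by linarith)
      have e : ∀ (w δ : ℝ), c m₀ / Real.sqrt (w ^ 2 + δ ^ 2 + s m₀) =
          c m₀ * (1 / Real.sqrt (w ^ 2 + (δ ^ 2 + s m₀))) := by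
        intro w δ; rw [mul_one_div]; ring_nf
      rw [e v δ₁, e v δ₂, e u δ₁, e u δ₂, ← mul_sub, ← mul_sub]
      exact mul_lt_mul_of_pos_left hcore hm₀
  constructor
  · intro d hd
    have hd' : 0 < d := hd
    have h1 := hlt d hd'
    have h2 := hH₂nn d hd'
    have : H₁ d ^ 2 - H₂ d ^ 2 = (H₁ d - H₂ d) * (H₁ d + H₂ d) := by ring
    show 0 < H₁ d ^ 2 - H₂ d ^ 2
    rw [this]
    have : 0 < H₁ d + H₂ d := by linarith
    nlinarith
  · intro u hu v hv huv
    have hu' : 0 < u := hu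
    have hv' : 0 < v := hv
    show H₁ v ^ 2 - H₂ v ^ 2 < H₁ u ^ 2 - H₂ u ^ 2
    have hD := hDanti u v hu' huv
    have hS : H₁ v + H₂ v < H₁ u + H₂ u := by
      have h1 := hanti δ₁ le_rfl u v hu' huv
      have h2 := hanti δ₂ hδ₁₂.le u v hu' huv
      simp only [hH₁, hH₂]
      exact add_lt_add h1 h2
    have hDv : 0 < H₁ v - H₂ v := sub_pos.mpr (hlt v hv')
    have hSv : 0 < H₁ v + H₂ v := by
      have := hlt v hv'; have := hH₂nn v hv'; linarith
    have e1 : H₁ v ^ 2 - H₂ v ^ 2 = (H₁ v - H₂ v) * (H₁ v + H₂ v) := by ring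
    have e2 : H₁ u ^ 2 - H₂ u ^ 2 = (H₁ u - H₂ u) * (H₁ u + H₂ u) := by ring
    rw [e1, e2]
    exact mul_lt_mul'' hD hS hDv.le hSv.le
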